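/- Stability of kernel gradient descent under kernel perturbation: let n ≥ 1, T > 0, λ > 0, ε ≥ 0, R ≥ 0, y ∈ ℝⁿ. Let K, K̃ : [0,T] → (n×n real matrices) be continuous with vᵀ K(t) v ≥ (λ/2) ‖v‖₂² for all v ∈ ℝⁿ and all t, and ‖K(t) − K̃(t)‖_{op} ≤ ε for all t ∈ [0,T]. Let f, f̃ : [0,T] → ℝⁿ be differentiable with f'(t) = −(1/n) K(t)(f(t) − y), f̃'(t) = −(1/n) K̃(t)(f̃(t) − y), f(0) = f̃(0), and suppose ‖f̃(t) − y‖₂ ≤ R for all t ∈ [0,T]. Then for every t ∈ [0,T], ‖f(t) − f̃(t)‖₂ ≤ (ε R / n) · min{t, 2n/λ}. -/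

import Mathlib

open Set

lemma aux_fence {T c lam' : ℝ} (hT : 0 < T) (hc : 0 ≤ c) (hl : 0 < lam')
    {u u' : ℝ → ℝ} (hu0 : u 0 = 0) (hnn : ∀ t ∈ Icc (0:ℝ) T, 0 ≤ u t)
    (hderiv : ∀ t ∈ Icc (0:ℝ) T, HasDerivWithinAt u (u' t) (Icc 0 T) t)
    (hub : ∀ t ∈ Icc (0:ℝ) T, u' t ≤ 2*c*Real.sqrt (u t) - lam' * u t) :
    ∀ t ∈ Icc (0:ℝ) T, u t ≤ (c * min t (2/lam'))^2 := by
  have hucont : ContinuousOn u (Icc 0 T) := fun t ht => (hderiv t ht).continuousWithinAt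
  have hderiv' : ∀ x ∈ Ico (0:ℝ) T, HasDerivWithinAt u (u' x) (Ici x) x := fun x hx =>
    (hderiv x (Ico_subset_Icc_self hx)).mono_of_mem_nhdsWithin (Icc_mem_nhdsGE_of_mem hx)
  -- Claim 1 : u t ≤ (c t)²
  have claim1 : ∀ t ∈ Icc (0:ℝ) T, u t ≤ (c * t)^2 := by
    intro t ht
    have key : ∀ δ > (0:ℝ), u t ≤ ((c+δ)*t + δ)^2 := by
      intro δ hδ
      have hB : ∀ x : ℝ, HasDerivAt (fun x => ((c+δ)*x + δ)^2)
          (2*((c+δ)*x+δ)*(c+δ)) x := by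
        intro x
        have h1 : HasDerivAt (fun x : ℝ => (c+δ)*x + δ) (c+δ) x := by
          simpa using ((hasDerivAt_id x).const_mul (c+δ)).add_const δ
        simpa [mul_comm, mul_assoc, mul_left_comm] using (h1.fun_pow 2)
      refine image_le_of_deriv_right_lt_deriv_boundary hucont hderiv' ?_ hB ?_ ht
      · simp [hu0]; positivity
      · intro x hx hcontact
        have hx0 : (0:ℝ) ≤ x := hx.1
        have hpos : 0 < (c+δ)*x + δ := by positivity
        have hsq : Real.sqrt (u x) = (c+δ)*x + δ := by
          rw [hcontact, Real.sqrt_sq hpos.le]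
        calc u' x ≤ 2*c*Real.sqrt (u x) - lam' * u x := hub x (Ico_subset_Icc_self hx)
          _ ≤ 2*c*Real.sqrt (u x) := by
              have := hnn x (Ico_subset_Icc_self hx); nlinarith
          _ = 2*c*((c+δ)*x+δ) := by rw [hsq]
          _ < 2*((c+δ)*x+δ)*(c+δ) := by nlinarith
    have htend : Filter.Tendsto (fun δ : ℝ => ((c+δ)*t + δ)^2) (nhdsWithin 0 (Ioi 0))
        (nhds ((c*t)^2)) := by
      have : Filter.Tendsto (fun δ : ℝ => ((c+δ)*t + δ)^2) (nhds 0) (nhds (((c+0)*t+0)^2)) :=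
        (Continuous.tendsto (by continuity) 0)
      simpa using this.mono_left nhdsWithin_le_nhds
    exact ge_of_tendsto htend (eventually_nhdsWithin_of_forall (fun δ hδ => key δ hδ))
  -- Claim 2 : u t ≤ (2c/lam')²
  have claim2 : ∀ t ∈ Icc (0:ℝ) T, u t ≤ (2*c/lam')^2 := by
    intro t ht
    have key : ∀ δ > (0:ℝ), u t ≤ (2*c/lam' + δ)^2 + δ * t := by
      intro δ hδ
      have hB : ∀ x : ℝ, HasDerivAt (fun x => (2*c/lam' + δ)^2 + δ * x) δ x := by
        intro x
        simpa using ((hasDerivAt_id x).const_mul δ).const_add ((2*c/lam' + δ)^2)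
      refine image_le_of_deriv_right_lt_deriv_boundary hucont hderiv' ?_ hB ?_ ht
      · simp [hu0]; positivity
      · intro x hx hcontact
        have hx0 : (0:ℝ) ≤ x := hx.1
        have hM : 0 < 2*c/lam' + δ := by positivity
        have hsqge : 2*c/lam' + δ ≤ Real.sqrt (u x) := by
          rw [hcontact]
          have : (2*c/lam' + δ)^2 ≤ (2*c/lam' + δ)^2 + δ*x := by nlinarith
          calc 2*c/lam' + δ = Real.sqrt ((2*c/lam'+δ)^2) := (Real.sqrt_sq hM.le).symm
            _ ≤ _ := Real.sqrt_le_sqrt this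
        have hsqpos : 0 < Real.sqrt (u x) := lt_of_lt_of_le hM hsqge
        have h2c : 2*c < lam' * Real.sqrt (u x) := by
          have : lam' * (2*c/lam' + δ) ≤ lam' * Real.sqrt (u x) :=
            mul_le_mul_of_nonneg_left hsqge hl.le
          have heq : lam' * (2*c/lam') = 2*c := by field_simp
          nlinarith
        have husq : u x = Real.sqrt (u x) ^ 2 :=
          (Real.sq_sqrt (hnn x (Ico_subset_Icc_self hx))).symm
        calc u' x ≤ 2*c*Real.sqrt (u x) - lam' * u x := hub x (Ico_subset_Icc_self hx)
          _ < 0 := by nlinarith [husq, h2c, hsqpos]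
          _ < δ := hδ
    have htend : Filter.Tendsto (fun δ : ℝ => (2*c/lam' + δ)^2 + δ * t) (nhdsWithin 0 (Ioi 0))
        (nhds ((2*c/lam')^2)) := by
      have : Filter.Tendsto (fun δ : ℝ => (2*c/lam' + δ)^2 + δ * t) (nhds 0)
          (nhds ((2*c/lam' + 0)^2 + 0 * t)) := (Continuous.tendsto (by continuity) 0)
      simpa using this.mono_left nhdsWithin_le_nhds
    exact ge_of_tendsto htend (eventually_nhdsWithin_of_forall (fun δ hδ => key δ hδ))
  intro t ht
  rcases le_total t (2/lam') with h | h
  · rw [min_eq_left h]; exact claim1 t ht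
  · rw [min_eq_right h]
    have : c * (2/lam') = 2*c/lam' := by ring
    rw [this]; exact claim2 t ht
open scoped RealInnerProductSpace

/-- Stability of kernel gradient descent under kernel perturbation: if
`vᵀ K(t) v ≥ (λ/2)‖v‖₂²`, `‖K(t) - K̃(t)‖_op ≤ ε` on `[0,T]`,
`f' = -(1/n) K (f - y)`, `f̃' = -(1/n) K̃ (f̃ - y)`, `f(0) = f̃(0)`, and
`‖f̃(t) - y‖₂ ≤ R` on `[0,T]`, then `‖f(t) - f̃(t)‖₂ ≤ (ε R / n) min{t, 2n/λ}`. -/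
theorem stmt_11 (n : ℕ) (hn : 1 ≤ n) (T lam ε R : ℝ)
    (hT : 0 < T) (hlam : 0 < lam) (hε : 0 ≤ ε) (hR : 0 ≤ R)
    (y : EuclideanSpace ℝ (Fin n))
    (K K' : ℝ → Matrix (Fin n) (Fin n) ℝ)
    (hKcont : ContinuousOn K (Set.Icc 0 T))
    (hK'cont : ContinuousOn K' (Set.Icc 0 T))
    (hKpos : ∀ t ∈ Set.Icc (0 : ℝ) T, ∀ v : EuclideanSpace ℝ (Fin n),
      lam / 2 * ‖v‖ ^ 2 ≤ ⟪v, Matrix.toEuclideanLin (K t) v⟫)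
    (hclose : ∀ t ∈ Set.Icc (0 : ℝ) T,
      ‖LinearMap.toContinuousLinearMap (Matrix.toEuclideanLin (K t - K' t))‖ ≤ ε)
    (f g : ℝ → EuclideanSpace ℝ (Fin n))
    (hf : ∀ t ∈ Set.Icc (0 : ℝ) T,
      HasDerivWithinAt f (-(1 / n : ℝ) • Matrix.toEuclideanLin (K t) (f t - y))
        (Set.Icc 0 T) t)
    (hg : ∀ t ∈ Set.Icc (0 : ℝ) T,
      HasDerivWithinAt g (-(1 / n : ℝ) • Matrix.toEuclideanLin (K' t) (g t - y))
        (Set.Icc 0 T) t)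
    (h0 : f 0 = g 0)
    (hgbound : ∀ t ∈ Set.Icc (0 : ℝ) T, ‖g t - y‖ ≤ R) :
    ∀ t ∈ Set.Icc (0 : ℝ) T, ‖f t - g t‖ ≤ ε * R / n * min t (2 * n / lam) := by
  have hn0 : (0:ℝ) < n := by exact_mod_cast Nat.pos_of_ne_zero (by omega)
  set c : ℝ := ε * R / n with hc_def
  set lam' : ℝ := lam / n with hlam'_def
  have hc : 0 ≤ c := by positivity
  have hl : 0 < lam' := by positivity
  set h : ℝ → EuclideanSpace ℝ (Fin n) := fun t => f t - g t with hh_def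
  set D : ℝ → EuclideanSpace ℝ (Fin n) := fun t =>
    (-(1 / n : ℝ) • Matrix.toEuclideanLin (K t) (f t - y)) -
    (-(1 / n : ℝ) • Matrix.toEuclideanLin (K' t) (g t - y)) with hD_def
  set u : ℝ → ℝ := fun t => ⟪h t, h t⟫ with hu_def
  set u' : ℝ → ℝ := fun t => 2 * ⟪h t, D t⟫ with hu'_def
  have hueq : ∀ t, u t = ‖h t‖^2 := fun t => real_inner_self_eq_norm_sq (h t)
  have hsqrtu : ∀ t, Real.sqrt (u t) = ‖h t‖ := fun t => by
    rw [hueq t, Real.sqrt_sq (norm_nonneg _)]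
  have hderiv : ∀ t ∈ Set.Icc (0:ℝ) T, HasDerivWithinAt u (u' t) (Set.Icc 0 T) t := by
    intro t ht
    have hhd : HasDerivWithinAt h (D t) (Set.Icc 0 T) t := (hf t ht).sub (hg t ht)
    have := HasDerivWithinAt.inner ℝ hhd hhd
    -- derivative ⟪h t, D t⟫ + ⟪D t, h t⟫
    have heq : u' t = ⟪h t, D t⟫ + ⟪D t, h t⟫ := by
      show 2 * ⟪h t, D t⟫ = ⟪h t, D t⟫ + ⟪D t, h t⟫
      rw [real_inner_comm (D t) (h t)]
      ring
    rw [heq]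
    exact this
  have hub : ∀ t ∈ Set.Icc (0:ℝ) T, u' t ≤ 2*c*Real.sqrt (u t) - lam' * u t := by
    intro t ht
    have e1 : Matrix.toEuclideanLin (K t - K' t) (g t - y) =
        Matrix.toEuclideanLin (K t) (g t - y) - Matrix.toEuclideanLin (K' t) (g t - y) := by
      rw [map_sub Matrix.toEuclideanLin (K t) (K' t), LinearMap.sub_apply]
    have hsplit : Matrix.toEuclideanLin (K t) (f t - y) -
        Matrix.toEuclideanLin (K' t) (g t - y) =
        Matrix.toEuclideanLin (K t) (h t) + Matrix.toEuclideanLin (K t - K' t) (g t - y) := by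
      rw [e1]
      have hfy : f t - y = h t + (g t - y) := by
        show f t - y = (f t - g t) + (g t - y); abel
      rw [hfy, map_add]
      abel
    have hDeq : D t = -(1 / n : ℝ) •
        (Matrix.toEuclideanLin (K t) (h t) + Matrix.toEuclideanLin (K t - K' t) (g t - y)) := by
      rw [← hsplit]
      show -(1 / n : ℝ) • Matrix.toEuclideanLin (K t) (f t - y) -
        -(1 / n : ℝ) • Matrix.toEuclideanLin (K' t) (g t - y) = _
      rw [smul_sub]
    have hip : ⟪h t, D t⟫ = -(1/n : ℝ) *
        (⟪h t, Matrix.toEuclideanLin (K t) (h t)⟫ +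
         ⟪h t, Matrix.toEuclideanLin (K t - K' t) (g t - y)⟫) := by
      rw [hDeq, real_inner_smul_right, inner_add_right]
    have hpos := hKpos t ht (h t)
    have hEbound : ‖Matrix.toEuclideanLin (K t - K' t) (g t - y)‖ ≤ ε * R := by
      have h1 := (LinearMap.toContinuousLinearMap
        (Matrix.toEuclideanLin (K t - K' t))).le_opNorm (g t - y)
      simp only [LinearMap.coe_toContinuousLinearMap'] at h1
      calc ‖Matrix.toEuclideanLin (K t - K' t) (g t - y)‖
          ≤ ‖LinearMap.toContinuousLinearMap (Matrix.toEuclideanLin (K t - K' t))‖ * ‖g t - y‖ := h1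
        _ ≤ ε * R := mul_le_mul (hclose t ht) (hgbound t ht) (norm_nonneg _) hε
    have hE : -(‖h t‖ * (ε * R)) ≤ ⟪h t, Matrix.toEuclideanLin (K t - K' t) (g t - y)⟫ := by
      have habs := abs_real_inner_le_norm (h t) (Matrix.toEuclideanLin (K t - K' t) (g t - y))
      have h2 : ‖h t‖ * ‖Matrix.toEuclideanLin (K t - K' t) (g t - y)‖ ≤ ‖h t‖ * (ε * R) :=
        mul_le_mul_of_nonneg_left hEbound (norm_nonneg _)
      have hneg := neg_abs_le ⟪h t, Matrix.toEuclideanLin (K t - K' t) (g t - y)⟫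
      linarith
    have key : ⟪h t, D t⟫ ≤ -(lam/(2*n)) * ‖h t‖^2 + (1/n) * (‖h t‖ * (ε * R)) := by
      rw [hip]
      have h1n : (0:ℝ) ≤ 1/n := by positivity
      have hsum : lam / 2 * ‖h t‖^2 + -(‖h t‖ * (ε * R)) ≤
          ⟪h t, Matrix.toEuclideanLin (K t) (h t)⟫ +
          ⟪h t, Matrix.toEuclideanLin (K t - K' t) (g t - y)⟫ := add_le_add hpos hE
      have h3 := mul_le_mul_of_nonneg_left hsum h1n
      have hre : -(1/n : ℝ) * (⟪h t, Matrix.toEuclideanLin (K t) (h t)⟫ +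
          ⟪h t, Matrix.toEuclideanLin (K t - K' t) (g t - y)⟫) ≤
          -((1/n : ℝ) * (lam / 2 * ‖h t‖^2 + -(‖h t‖ * (ε * R)))) := by linarith
      calc -(1/n : ℝ) * (⟪h t, Matrix.toEuclideanLin (K t) (h t)⟫ +
          ⟪h t, Matrix.toEuclideanLin (K t - K' t) (g t - y)⟫)
          ≤ -((1/n : ℝ) * (lam / 2 * ‖h t‖^2 + -(‖h t‖ * (ε * R)))) := hre
        _ = -(lam/(2*n)) * ‖h t‖^2 + (1/n) * (‖h t‖ * (ε * R)) := by ring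
    rw [hsqrtu t, hueq t, hc_def, hlam'_def]
    have hu'eq : u' t = 2 * ⟪h t, D t⟫ := rfl
    rw [hu'eq]
    have hfin : 2 * (-(lam/(2*n)) * ‖h t‖^2 + (1/n) * (‖h t‖ * (ε * R))) =
        2 * (ε * R / n) * ‖h t‖ - lam / n * ‖h t‖^2 := by ring
    have : 2 * ⟪h t, D t⟫ ≤ 2 * (ε * R / n) * ‖h t‖ - lam / n * ‖h t‖^2 := by linarith
    linarith
  have hu0 : u 0 = 0 := by simp [hu_def, hh_def, h0]
  have hnn : ∀ t ∈ Set.Icc (0:ℝ) T, 0 ≤ u t := fun t _ => by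
    rw [hueq t]; positivity
  have := aux_fence hT hc hl hu0 hnn hderiv hub
  intro t ht
  have hbound := this t ht
  have hrhs : c * min t (2/lam') = ε * R / n * min t (2 * n / lam) := by
    have : 2 / lam' = 2 * n / lam := by
      rw [hlam'_def]; field_simp
    rw [this]
  have hmin : 0 ≤ min t (2/lam') := le_min ht.1 (by positivity)
  have hrnn : 0 ≤ c * min t (2/lam') := mul_nonneg hc hmin
  rw [← hrhs]
  calc ‖f t - g t‖ = Real.sqrt (u t) := (hsqrtu t).symm
    _ ≤ Real.sqrt ((c * min t (2/lam'))^2) := Real.sqrt_le_sqrt hbound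
    _ = c * min t (2/lam') := Real.sqrt_sq hrnn
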